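/- For every p ∈ [2, ∞), the constants α = 1/(1+p) and β = log(π_p/2) / log(cosh_p(π_p/2)) are best possible in the inequality cosh_p(x)^(-β) < sin_p(x)/x < cosh_p(x)^(-α): if a real number a satisfies sin_p(x)/x < cosh_p(x)^(-a) for all x ∈ (0, π_p/2), then a ≤ 1/(1+p); and if a real number b satisfies cosh_p(x)^(-b) < sin_p(x)/x for all x ∈ (0, π_p/2), then b ≥ β. Equivalently, the function g(x) = log(x / sin_p(x)) / log(cosh_p(x)) satisfies lim_{x→0+} g(x) = 1/(1+p) and lim_{x→(π_p/2)-} g(x) = β. -/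

import Mathlib

open Real Set Filter Topology

/-- Generalized inverse sine: `arcsinp p x = ∫₀ˣ (1 - tᵖ)^(-1/p) dt`. -/
noncomputable def arcsinp (p x : ℝ) : ℝ := ∫ t in (0:ℝ)..x, (1 - t ^ p) ^ (-(1/p))

/-- The generalized half-pi: `π_p/2 = arcsin_p 1`. -/
noncomputable def pipHalf (p : ℝ) : ℝ := arcsinp p 1

/-- Generalized sine: the inverse of `arcsinp p` viewed as a map on `[0,1]`. -/
noncomputable def sinp (p : ℝ) : ℝ → ℝ := Function.invFunOn (arcsinp p) (Set.Icc 0 1)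

/-- Generalized cosine. -/
noncomputable def cosp (p x : ℝ) : ℝ := (1 - (sinp p x) ^ p) ^ (1/p : ℝ)

/-- Generalized tangent. -/
noncomputable def tanp (p x : ℝ) : ℝ := sinp p x / cosp p x

/-- Generalized inverse hyperbolic sine: `arsinhp p x = ∫₀ˣ (1 + tᵖ)^(-1/p) dt`. -/
noncomputable def arsinhp (p x : ℝ) : ℝ := ∫ t in (0:ℝ)..x, (1 + t ^ p) ^ (-(1/p))

/-- Generalized hyperbolic sine: the inverse of `arsinhp p` viewed as a map on `[0,∞)`. -/
noncomputable def sinhp (p : ℝ) : ℝ → ℝ := Function.invFunOn (arsinhp p) (Set.Ici 0)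

/-- Generalized hyperbolic cosine. -/
noncomputable def coshp (p x : ℝ) : ℝ := (1 + (sinhp p x) ^ p) ^ (1/p : ℝ)

/-- Generalized hyperbolic tangent. -/
noncomputable def tanhp (p x : ℝ) : ℝ := sinhp p x / coshp p x

open MeasureTheory intervalIntegral

noncomputable def fsI (p t : ℝ) : ℝ := (1 - t ^ p) ^ (-(1/p))

lemma fsI_meas (p : ℝ) : Measurable (fsI p) := by unfold fsI; measurability

lemma fsI_one_le {p : ℝ} (hp : 2 ≤ p) {t : ℝ} (h : t ∈ Ico (0:ℝ) 1) : 1 ≤ fsI p t := by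
  have hp0 : (0:ℝ) < p := by linarith
  have h1 : t ^ p < 1 := Real.rpow_lt_one h.1 h.2 hp0
  have h2 : 0 ≤ t ^ p := Real.rpow_nonneg h.1 p
  have hb0 : 0 < 1 - t ^ p := by linarith
  have hb1 : 1 - t ^ p ≤ 1 := by linarith
  have hexp : -(1/p) ≤ 0 := by
    have : 0 < 1/p := by positivity
    linarith
  calc (1:ℝ) = 1 ^ (-(1/p)) := (Real.one_rpow _).symm
  _ ≤ (1 - t ^ p) ^ (-(1/p)) := Real.rpow_le_rpow_of_nonpos hb0 hb1 hexp

lemma fsI_nonneg {p : ℝ} (hp : 2 ≤ p) {t : ℝ} (h : t ∈ Icc (0:ℝ) 1) : 0 ≤ fsI p t := by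
  have hp0 : (0:ℝ) < p := by linarith
  apply Real.rpow_nonneg
  have : t ^ p ≤ 1 := Real.rpow_le_one h.1 h.2 hp0.le
  linarith

lemma fsI_le {p : ℝ} (hp : 2 ≤ p) {t : ℝ} (h : t ∈ Icc (0:ℝ) 1) : fsI p t ≤ (1 - t) ^ (-(1/p)) := by
  have hp0 : (0:ℝ) < p := by linarith
  have hexp : -(1/p) ≤ 0 := by
    have : 0 < 1/p := by positivity
    linarith
  rcases eq_or_lt_of_le h.2 with h1 | h1
  · subst h1
    simp [fsI, Real.one_rpow, Real.zero_rpow (show -(1/p) ≠ 0 by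
      have : 0 < 1/p := by positivity
      linarith)]
  · have ht : t ^ p ≤ t := by
      rcases eq_or_lt_of_le h.1 with h0 | h0
      · rw [← h0, Real.zero_rpow hp0.ne']
        
      · calc t ^ p ≤ t ^ (1:ℝ) :=
          Real.rpow_le_rpow_of_exponent_ge h0 h1.le (by linarith)
        _ = t := Real.rpow_one t
    exact Real.rpow_le_rpow_of_nonpos (by linarith) (by linarith) hexp

lemma fsI_intInt {p : ℝ} (hp : 2 ≤ p) : IntervalIntegrable (fsI p) volume 0 1 := by
  have hp0 : (0:ℝ) < p := by linarith
  have hr : (-1:ℝ) < -(1/p) := by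
    have : 1/p ≤ 1/2 := by
      rw [div_le_div_iff₀ hp0 (by norm_num)]; linarith
    linarith
  have hg : IntervalIntegrable (fun x : ℝ => (1 - x) ^ (-(1/p))) volume 0 1 := by
    have := (intervalIntegrable_rpow' (a := 0) (b := 1) hr).comp_sub_left 1
    simpa using this.symm
  apply hg.mono_fun ((fsI_meas p).aestronglyMeasurable)
  have h1 : Set.uIoc (0:ℝ) 1 = Ioc 0 1 := by rw [uIoc_of_le]; norm_num
  rw [h1]
  filter_upwards [MeasureTheory.ae_restrict_mem measurableSet_Ioc] with t ht
  have ht' : t ∈ Icc (0:ℝ) 1 := ⟨ht.1.le, ht.2⟩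
  have h3 : (0:ℝ) ≤ (1 - t) ^ (-(1/p)) := Real.rpow_nonneg (by linarith [ht'.2]) _
  rw [Real.norm_eq_abs, Real.norm_eq_abs, abs_of_nonneg (fsI_nonneg hp ht'), abs_of_nonneg h3]
  exact fsI_le hp ht'

lemma arcsinp_eq (p x : ℝ) : arcsinp p x = ∫ t in (0:ℝ)..x, fsI p t := rfl

lemma arcsinp_sub {p : ℝ} (hp : 2 ≤ p) {s1 s2 : ℝ} (h1 : 0 ≤ s1) (h12 : s1 ≤ s2)
    (h2 : s2 ≤ 1) : s2 - s1 ≤ arcsinp p s2 - arcsinp p s1 := by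
  have hi1 : IntervalIntegrable (fsI p) volume 0 s1 :=
    (fsI_intInt hp).mono_set (by
      rw [uIcc_of_le h1, uIcc_of_le (by norm_num : (0:ℝ) ≤ 1)]
      exact Icc_subset_Icc le_rfl (le_trans h12 h2))
  have hi2 : IntervalIntegrable (fsI p) volume s1 s2 :=
    (fsI_intInt hp).mono_set (by
      rw [uIcc_of_le h12, uIcc_of_le (by norm_num : (0:ℝ) ≤ 1)]
      exact Icc_subset_Icc h1 h2)
  have key : arcsinp p s2 - arcsinp p s1 = ∫ t in s1..s2, fsI p t := by
    rw [arcsinp_eq, arcsinp_eq]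
    rw [← intervalIntegral.integral_add_adjacent_intervals hi1 hi2]
    ring
  rw [key]
  have hmono : ∫ t in s1..s2, (1:ℝ) ≤ ∫ t in s1..s2, fsI p t := by
    apply intervalIntegral.integral_mono_ae_restrict h12 intervalIntegrable_const hi2
    have hne : ∀ᵐ t : ℝ ∂volume, t ≠ 1 := by
      rw [MeasureTheory.ae_iff]
      simpa using (Real.volume_singleton (a := 1))
    filter_upwards [MeasureTheory.ae_restrict_of_ae hne,
      MeasureTheory.ae_restrict_mem measurableSet_Icc] with t htne ht
    exact fsI_one_le hp ⟨le_trans h1 ht.1, lt_of_le_of_ne (le_trans ht.2 h2) htne⟩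
  simpa using hmono

lemma arcsinp_zero (p : ℝ) : arcsinp p 0 = 0 := by
  rw [arcsinp_eq, intervalIntegral.integral_same]

lemma arcsinp_self_le {p : ℝ} (hp : 2 ≤ p) {s : ℝ} (h0 : 0 ≤ s) (h1 : s ≤ 1) :
    s ≤ arcsinp p s := by
  have := arcsinp_sub hp le_rfl h0 h1
  rw [arcsinp_zero] at this; linarith

lemma arcsinp_mono {p : ℝ} (hp : 2 ≤ p) {s1 s2 : ℝ} (h1 : 0 ≤ s1) (h12 : s1 ≤ s2)
    (h2 : s2 ≤ 1) : arcsinp p s1 ≤ arcsinp p s2 := by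
  have := arcsinp_sub hp h1 h12 h2; linarith

lemma arcsinp_strict {p : ℝ} (hp : 2 ≤ p) {s1 s2 : ℝ} (h1 : 0 ≤ s1) (h12 : s1 < s2)
    (h2 : s2 ≤ 1) : arcsinp p s1 < arcsinp p s2 := by
  have := arcsinp_sub hp h1 h12.le h2; linarith

lemma pipHalf_pos {p : ℝ} (hp : 2 ≤ p) : 1 ≤ pipHalf p :=
  arcsinp_self_le hp (by norm_num) le_rfl

lemma arcsinp_cont {p : ℝ} (hp : 2 ≤ p) : ContinuousOn (arcsinp p) (Icc 0 1) := by
  have h := intervalIntegral.continuousOn_primitive_interval (a := 0) (b := 1)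
    (f := fsI p) (μ := volume) ?_
  · rw [uIcc_of_le (by norm_num : (0:ℝ) ≤ 1)] at h
    exact fun x hx => ((h x hx).congr (fun y hy => (arcsinp_eq p y).symm)
      ((arcsinp_eq p x).symm))
  · rw [uIcc_of_le (by norm_num : (0:ℝ) ≤ 1)]
    exact (intervalIntegrable_iff_integrableOn_Icc_of_le (by norm_num)).1 (fsI_intInt hp)

lemma sinp_spec {p : ℝ} (hp : 2 ≤ p) {x : ℝ} (hx : x ∈ Icc 0 (pipHalf p)) :
    sinp p x ∈ Icc (0:ℝ) 1 ∧ arcsinp p (sinp p x) = x := by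
  have hsurj : x ∈ arcsinp p '' Icc 0 1 := by
    apply intermediate_value_Icc (by norm_num : (0:ℝ) ≤ 1) (arcsinp_cont hp)
    rw [arcsinp_zero]; exact hx
  obtain ⟨s, hs, hfs⟩ := hsurj
  have hex : ∃ a ∈ Icc (0:ℝ) 1, arcsinp p a = x := ⟨s, hs, hfs⟩
  exact ⟨Function.invFunOn_mem hex, Function.invFunOn_eq hex⟩

lemma sinp_arcsinp {p : ℝ} (hp : 2 ≤ p) {s : ℝ} (hs : s ∈ Icc (0:ℝ) 1) :
    sinp p (arcsinp p s) = s := by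
  have hex : ∃ a ∈ Icc (0:ℝ) 1, arcsinp p a = arcsinp p s := ⟨s, hs, rfl⟩
  have h1 := Function.invFunOn_mem hex
  have h2 := Function.invFunOn_eq hex
  by_contra hne
  rcases lt_or_gt_of_ne hne with h | h
  · exact absurd h2 (ne_of_lt (arcsinp_strict hp h1.1 h hs.2))
  · exact absurd h2 (ne_of_gt (arcsinp_strict hp hs.1 h h1.2))

lemma sinp_pos {p : ℝ} (hp : 2 ≤ p) {x : ℝ} (hx0 : 0 < x) (hx1 : x ≤ pipHalf p) :
    0 < sinp p x := by
  obtain ⟨hmem, heq⟩ := sinp_spec hp ⟨hx0.le, hx1⟩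
  rcases eq_or_lt_of_le hmem.1 with h | h
  · exfalso; rw [← h, arcsinp_zero] at heq; linarith
  · exact h

lemma sinp_le_self {p : ℝ} (hp : 2 ≤ p) {x : ℝ} (hx0 : 0 ≤ x) (hx1 : x ≤ pipHalf p) :
    sinp p x ≤ x := by
  obtain ⟨hmem, heq⟩ := sinp_spec hp ⟨hx0, hx1⟩
  calc sinp p x ≤ arcsinp p (sinp p x) := arcsinp_self_le hp hmem.1 hmem.2
  _ = x := heq

lemma sinp_lt_one {p : ℝ} (hp : 2 ≤ p) {x : ℝ} (hx0 : 0 ≤ x) (hx1 : x < pipHalf p) :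
    sinp p x < 1 := by
  obtain ⟨hmem, heq⟩ := sinp_spec hp ⟨hx0, hx1.le⟩
  rcases eq_or_lt_of_le hmem.2 with h | h
  · exfalso; rw [h] at heq; rw [← heq] at hx1; exact lt_irrefl _ hx1
  · exact h

lemma sinp_tendsto_zero {p : ℝ} (hp : 2 ≤ p) :
    Tendsto (sinp p) (𝓝[>] (0:ℝ)) (𝓝[>] (0:ℝ)) := by
  have hπ : (0:ℝ) < pipHalf p := lt_of_lt_of_le one_pos (pipHalf_pos hp)
  have hev : ∀ᶠ x in 𝓝[>] (0:ℝ), x ∈ Ioo (0:ℝ) (pipHalf p) :=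
    Filter.eventually_mem_set.2 (Ioo_mem_nhdsGT_of_mem ⟨le_rfl, hπ⟩)
  rw [tendsto_nhdsWithin_iff]
  constructor
  · apply tendsto_of_tendsto_of_tendsto_of_le_of_le' tendsto_const_nhds
      (tendsto_id.mono_left nhdsWithin_le_nhds)
    · filter_upwards [hev] with x hx
      exact (sinp_pos hp hx.1 hx.2.le).le
    · filter_upwards [hev] with x hx
      exact sinp_le_self hp hx.1.le hx.2.le
  · filter_upwards [hev] with x hx
    exact sinp_pos hp hx.1 hx.2.le

lemma sinp_tendsto_one {p : ℝ} (hp : 2 ≤ p) :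
    Tendsto (sinp p) (𝓝[<] (pipHalf p)) (𝓝 (1:ℝ)) := by
  have hπ : (0:ℝ) < pipHalf p := lt_of_lt_of_le one_pos (pipHalf_pos hp)
  have hev : ∀ᶠ x in 𝓝[<] (pipHalf p), x ∈ Ioo (0:ℝ) (pipHalf p) :=
    Filter.eventually_mem_set.2 (Ioo_mem_nhdsLT_of_mem ⟨hπ, le_rfl⟩)
  rw [tendsto_order]
  constructor
  · intro c hc
    set c' := max c 0 with hc'
    have hc'1 : c' < 1 := max_lt hc one_pos
    have hc'0 : 0 ≤ c' := le_max_right _ _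
    have hFc : arcsinp p c' < pipHalf p := arcsinp_strict hp hc'0 hc'1 le_rfl
    have hmem : Ioo (arcsinp p c') (pipHalf p) ∈ 𝓝[<] (pipHalf p) :=
      Ioo_mem_nhdsLT_of_mem ⟨hFc, le_rfl⟩
    filter_upwards [Filter.eventually_mem_set.2 hmem, hev] with x hx hx2
    by_contra hcon
    push_neg at hcon
    have hsx : sinp p x ≤ c' := le_trans hcon (le_max_left _ _)
    have hmono := arcsinp_mono hp (sinp_spec hp ⟨hx2.1.le, hx2.2.le⟩).1.1 hsx hc'1.le
    rw [(sinp_spec hp ⟨hx2.1.le, hx2.2.le⟩).2] at hmono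
    linarith [hx.1]
  · intro c hc
    filter_upwards [hev] with x hx
    exact lt_of_lt_of_le (sinp_lt_one hp hx.1.le hx.2) hc.le

/-- `L u = log(1+u)/u` extended by `L 0 = 1`. -/
noncomputable def Lfun (u : ℝ) : ℝ := if u = 0 then 1 else Real.log (1 + u) / u

lemma Lfun_mul (u : ℝ) : Real.log (1 + u) = u * Lfun u := by
  unfold Lfun
  rcases eq_or_ne u 0 with h | h
  · simp [h]
  · rw [if_neg h, mul_div_cancel₀ _ h]

lemma Lfun_tendsto : Tendsto Lfun (𝓝 (0:ℝ)) (𝓝 1) := by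
  have hd : HasDerivAt (fun u : ℝ => Real.log (1 + u)) 1 0 := by
    have h1 : HasDerivAt (fun u : ℝ => 1 + u) 1 0 := by
      simpa using (hasDerivAt_id (0:ℝ)).const_add 1
    have h2 : HasDerivAt Real.log 1 (1 + 0 : ℝ) := by
      simpa using Real.hasDerivAt_log (by norm_num : (1:ℝ) + 0 ≠ 0)
    have := h2.comp 0 h1; rw [mul_one] at this; exact this
  have hs := hasDerivAt_iff_tendsto_slope.1 hd
  have hcongr : Tendsto Lfun (𝓝[≠] (0:ℝ)) (𝓝 1) := by
    apply hs.congr'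
    filter_upwards [self_mem_nhdsWithin] with u hu
    have hu' : u ≠ 0 := hu
    simp [slope, Lfun, if_neg hu', sub_zero, div_eq_inv_mul]
  rw [← nhdsNE_sup_pure (0:ℝ)]
  exact hcongr.sup (by simpa [Lfun] using tendsto_pure_nhds Lfun 0)

lemma slope_rpow_tendsto {p : ℝ} (hp : 2 ≤ p) :
    Tendsto (fun u : ℝ => ((1 - u) ^ (-(1/p)) - 1) / u) (𝓝[≠] (0:ℝ)) (𝓝 (1/p)) := by
  have hd : HasDerivAt (fun u : ℝ => (1 - u) ^ (-(1/p))) (1/p) 0 := by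
    have h1 : HasDerivAt (fun u : ℝ => 1 - u) (-1) 0 := by
      simpa using (hasDerivAt_id (0:ℝ)).const_sub 1
    have h2 : HasDerivAt (fun v : ℝ => v ^ (-(1/p))) (-(1/p) * (1:ℝ) ^ (-(1/p) - 1)) (1 - 0 : ℝ) := by
      have := Real.hasDerivAt_rpow_const (x := (1:ℝ)) (p := -(1/p)) (Or.inl one_ne_zero)
      simpa using this
    have h3 : HasDerivAt (fun u : ℝ => (1 - u) ^ (-(1/p)))
        (-(1/p) * (1:ℝ) ^ (-(1/p) - 1) * (-1)) 0 := h2.comp 0 h1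
    convert h3 using 1
    rw [Real.one_rpow]; ring
  have hs := hasDerivAt_iff_tendsto_slope.1 hd
  apply hs.congr'
  filter_upwards [self_mem_nhdsWithin] with u hu
  have hu' : u ≠ 0 := hu
  simp [slope, sub_zero, div_eq_inv_mul, Real.one_rpow]

lemma fsI_contAt {p : ℝ} (hp : 2 ≤ p) {x : ℝ} (hx : x ∈ Ioo (0:ℝ) 1) :
    ContinuousAt (fsI p) x := by
  have hp0 : (0:ℝ) < p := by linarith
  have h1 : ContinuousAt (fun t : ℝ => 1 - t ^ p) x := by
    apply continuousAt_const.sub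
    exact Real.continuousAt_rpow_const x p (Or.inr hp0.le)
  have hne : 1 - x ^ p ≠ 0 := by
    have := Real.rpow_lt_one hx.1.le hx.2 hp0
    intro h; linarith
  exact h1.rpow_const (Or.inl hne)

lemma arcsinp_hasDeriv {p : ℝ} (hp : 2 ≤ p) {x : ℝ} (hx : x ∈ Ioo (0:ℝ) 1) :
    HasDerivAt (arcsinp p) (fsI p x) x := by
  have hi : IntervalIntegrable (fsI p) volume 0 x :=
    (fsI_intInt hp).mono_set (by
      rw [uIcc_of_le hx.1.le, uIcc_of_le (by norm_num : (0:ℝ) ≤ 1)]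
      exact Icc_subset_Icc le_rfl hx.2.le)
  have h := intervalIntegral.integral_hasDerivAt_right hi
    ((fsI_meas p).stronglyMeasurable.stronglyMeasurableAtFilter) (fsI_contAt hp hx)
  exact h

lemma rpow_tendsto_zero_within (p : ℝ) (hp0 : 0 < p) :
    Tendsto (fun x : ℝ => x ^ p) (𝓝[>] (0:ℝ)) (𝓝[>] (0:ℝ)) := by
  rw [tendsto_nhdsWithin_iff]
  constructor
  · have h := (Real.continuousAt_rpow_const 0 p (Or.inr hp0.le)).tendsto
    rw [Real.zero_rpow hp0.ne'] at h
    exact h.mono_left nhdsWithin_le_nhds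
  · filter_upwards [self_mem_nhdsWithin] with x hx
    exact Real.rpow_pos_of_pos hx p

lemma arcsinp_tendsto_zero {p : ℝ} (hp : 2 ≤ p) :
    Tendsto (arcsinp p) (𝓝[>] (0:ℝ)) (𝓝 0) := by
  have h := (arcsinp_cont hp 0 ⟨le_rfl, by norm_num⟩).tendsto
  rw [arcsinp_zero] at h
  apply h.mono_left
  rw [nhdsWithin_le_iff]
  exact Filter.mem_of_superset (Ioo_mem_nhdsGT_of_mem ⟨le_rfl, by norm_num⟩)
    Ioo_subset_Icc_self

/-- Core L'Hôpital limit: `(arcsinp p x - x)/x^(p+1) → 1/(p(p+1))` as `x → 0+`. -/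
lemma arcsinp_sub_limit {p : ℝ} (hp : 2 ≤ p) :
    Tendsto (fun x : ℝ => (arcsinp p x - x) / x ^ (p+1)) (𝓝[>] (0:ℝ))
      (𝓝 (1/(p*(p+1)))) := by
  have hp0 : (0:ℝ) < p := by linarith
  have hp1 : (0:ℝ) < p + 1 := by linarith
  apply HasDerivAt.lhopital_zero_right_on_Ioo (a := (0:ℝ)) (b := 1) one_pos
    (f' := fun x => fsI p x - 1) (g' := fun x => (p+1) * x ^ p)
  · intro x hx
    exact (arcsinp_hasDeriv hp hx).sub (hasDerivAt_id x)
  · intro x hx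
    have := Real.hasDerivAt_rpow_const (x := x) (p := p + 1) (Or.inl hx.1.ne')
    simpa [add_sub_cancel_right] using this
  · intro x hx
    have : (0:ℝ) < x ^ p := Real.rpow_pos_of_pos hx.1 p
    positivity
  · have hid : Tendsto (fun x : ℝ => x) (𝓝[>] (0:ℝ)) (𝓝 0) :=
      tendsto_id.mono_left nhdsWithin_le_nhds
    have h := (arcsinp_tendsto_zero hp).sub hid
    simpa using h
  · have h := (rpow_tendsto_zero_within (p+1) hp1).mono_right nhdsWithin_le_nhds
    exact h
  · -- Tendsto (fun x => (fsI p x - 1)/((p+1) * x^p)) (𝓝[>]0) (𝓝 (1/(p(p+1))))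
    have hcomp : Tendsto (fun x : ℝ => ((1 - x ^ p) ^ (-(1/p)) - 1) / (x ^ p))
        (𝓝[>] (0:ℝ)) (𝓝 (1/p)) := by
      have hmap : Tendsto (fun x : ℝ => x ^ p) (𝓝[>] (0:ℝ)) (𝓝[≠] (0:ℝ)) := by
        apply (rpow_tendsto_zero_within p hp0).mono_right
        apply nhdsWithin_mono
        intro y hy
        exact ne_of_gt hy
      exact (slope_rpow_tendsto hp).comp hmap
    have := hcomp.mul (tendsto_const_nhds (x := (p+1)⁻¹))
    have heq : (1/p) * (p+1)⁻¹ = 1/(p*(p+1)) := by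
      field_simp
    rw [heq] at this
    apply this.congr
    intro x
    unfold fsI
    calc ((1 - x ^ p) ^ (-(1/p)) - 1) / x ^ p * (p+1)⁻¹
        = ((1 - x ^ p) ^ (-(1/p)) - 1) / x ^ p / (p+1) := (div_eq_mul_inv _ _).symm
      _ = ((1 - x ^ p) ^ (-(1/p)) - 1) / (x ^ p * (p+1)) := div_div _ _ _
      _ = ((1 - x ^ p) ^ (-(1/p)) - 1) / ((p+1) * x ^ p) := by rw [mul_comm (x ^ p) (p+1)]

noncomputable def uf (p x : ℝ) : ℝ := (x - sinp p x) / sinp p x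
noncomputable def qf (p x : ℝ) : ℝ := (x - sinp p x) / (sinp p x) ^ (p+1)

lemma qf_tendsto {p : ℝ} (hp : 2 ≤ p) :
    Tendsto (qf p) (𝓝[>] (0:ℝ)) (𝓝 (1/(p*(p+1)))) := by
  have hπ : (0:ℝ) < pipHalf p := lt_of_lt_of_le one_pos (pipHalf_pos hp)
  have h := (arcsinp_sub_limit hp).comp (sinp_tendsto_zero hp)
  apply h.congr'
  filter_upwards [Filter.eventually_mem_set.2 (Ioo_mem_nhdsGT_of_mem
    (show (0:ℝ) ∈ Ico (0:ℝ) (pipHalf p) from ⟨le_rfl, hπ⟩))] with x hx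
  have := (sinp_spec hp ⟨hx.1.le, hx.2.le⟩).2
  simp only [Function.comp_apply, qf, this]

lemma sinp_rpow_tendsto {p : ℝ} (hp : 2 ≤ p) :
    Tendsto (fun x => sinp p x ^ p) (𝓝[>] (0:ℝ)) (𝓝 0) := by
  have hp0 : (0:ℝ) < p := by linarith
  exact ((rpow_tendsto_zero_within p hp0).mono_right nhdsWithin_le_nhds).comp
    (sinp_tendsto_zero hp)

lemma uf_tendsto {p : ℝ} (hp : 2 ≤ p) :
    Tendsto (uf p) (𝓝[>] (0:ℝ)) (𝓝 0) := by
  have hπ : (0:ℝ) < pipHalf p := lt_of_lt_of_le one_pos (pipHalf_pos hp)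
  have h := (qf_tendsto hp).mul (sinp_rpow_tendsto hp)
  rw [mul_zero] at h
  apply h.congr'
  filter_upwards [Filter.eventually_mem_set.2 (Ioo_mem_nhdsGT_of_mem
    (show (0:ℝ) ∈ Ico (0:ℝ) (pipHalf p) from ⟨le_rfl, hπ⟩))] with x hx
  have hs0 : 0 < sinp p x := sinp_pos hp hx.1 hx.2.le
  have hsp : sinp p x ^ (p+1) = sinp p x ^ p * sinp p x := by
    rw [Real.rpow_add hs0, Real.rpow_one]
  unfold qf uf
  rw [hsp]
  have h1 : sinp p x ^ p ≠ 0 := (Real.rpow_pos_of_pos hs0 p).ne'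
  field_simp

lemma hA_tendsto {p : ℝ} (hp : 2 ≤ p) :
    Tendsto (fun x => Real.log (x / sinp p x) / x ^ p) (𝓝[>] (0:ℝ))
      (𝓝 (1/(p*(p+1)))) := by
  have hπ : (0:ℝ) < pipHalf p := lt_of_lt_of_le one_pos (pipHalf_pos hp)
  have hL : Tendsto (fun x => Lfun (uf p x)) (𝓝[>] (0:ℝ)) (𝓝 1) :=
    Lfun_tendsto.comp (uf_tendsto hp)
  have hinv : Tendsto (fun x => ((1 + uf p x)⁻¹) ^ p) (𝓝[>] (0:ℝ)) (𝓝 1) := by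
    have h1 : Tendsto (fun x => (1 + uf p x)⁻¹) (𝓝[>] (0:ℝ)) (𝓝 1) := by
      have := ((uf_tendsto hp).const_add 1).inv₀ (by norm_num)
      simpa using this
    have h2 : ContinuousAt (fun v : ℝ => v ^ p) 1 :=
      Real.continuousAt_rpow_const 1 p (Or.inl one_ne_zero)
    have := h2.tendsto.comp h1
    rwa [Real.one_rpow] at this
  have h := (hL.mul (qf_tendsto hp)).mul hinv
  rw [one_mul, mul_one] at h
  apply h.congr'
  filter_upwards [Filter.eventually_mem_set.2 (Ioo_mem_nhdsGT_of_mem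
    (show (0:ℝ) ∈ Ico (0:ℝ) (pipHalf p) from ⟨le_rfl, hπ⟩))] with x hx
  have hs0 : 0 < sinp p x := sinp_pos hp hx.1 hx.2.le
  have hx0 : 0 < x := hx.1
  have h1u : (1:ℝ) + uf p x = x / sinp p x := by
    unfold uf; field_simp; ring
  have h2 : Real.log (x / sinp p x) = uf p x * Lfun (uf p x) := by
    rw [← h1u, Lfun_mul]
  have h3 : ((1 + uf p x)⁻¹) ^ p = sinp p x ^ p / x ^ p := by
    rw [h1u, inv_div, Real.div_rpow hs0.le hx0.le]
  rw [h3, h2]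
  unfold uf qf
  have hsp : sinp p x ^ (p+1) = sinp p x ^ p * sinp p x := by
    rw [Real.rpow_add hs0, Real.rpow_one]
  rw [hsp]
  have h4 : sinp p x ^ p ≠ 0 := (Real.rpow_pos_of_pos hs0 p).ne'
  have h5 : x ^ p ≠ 0 := (Real.rpow_pos_of_pos hx0 p).ne'
  field_simp

noncomputable def ghI (p t : ℝ) : ℝ := (1 + t ^ p) ^ (-(1/p))

lemma arsinhp_eq (p x : ℝ) : arsinhp p x = ∫ t in (0:ℝ)..x, ghI p t := rfl

lemma ghI_base_pos {p : ℝ} (hp : 2 ≤ p) {t : ℝ} (ht : 0 ≤ t) : 0 < 1 + t ^ p := by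
  have : 0 ≤ t ^ p := Real.rpow_nonneg ht p
  linarith

lemma ghI_pos {p : ℝ} (hp : 2 ≤ p) {t : ℝ} (ht : 0 ≤ t) : 0 < ghI p t :=
  Real.rpow_pos_of_pos (ghI_base_pos hp ht) _

lemma ghI_le_one {p : ℝ} (hp : 2 ≤ p) {t : ℝ} (ht : 0 ≤ t) : ghI p t ≤ 1 := by
  have hp0 : (0:ℝ) < p := by linarith
  have hexp : -(1/p) ≤ 0 := by
    have : 0 < 1/p := by positivity
    linarith
  calc ghI p t ≤ 1 ^ (-(1/p)) :=
    Real.rpow_le_rpow_of_nonpos one_pos (by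
      have : 0 ≤ t ^ p := Real.rpow_nonneg ht p
      linarith) hexp
  _ = 1 := Real.one_rpow _

lemma ghI_anti {p : ℝ} (hp : 2 ≤ p) {t1 t2 : ℝ} (h1 : 0 ≤ t1) (h12 : t1 ≤ t2) :
    ghI p t2 ≤ ghI p t1 := by
  have hp0 : (0:ℝ) < p := by linarith
  have hexp : -(1/p) ≤ 0 := by
    have : 0 < 1/p := by positivity
    linarith
  apply Real.rpow_le_rpow_of_nonpos (ghI_base_pos hp h1) _ hexp
  have := Real.rpow_le_rpow h1 h12 hp0.le
  linarith

lemma ghI_contOn {p : ℝ} (hp : 2 ≤ p) : ContinuousOn (ghI p) (Ici 0) := by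
  have hp0 : (0:ℝ) < p := by linarith
  intro t ht
  apply ContinuousAt.continuousWithinAt
  have h1 : ContinuousAt (fun t : ℝ => 1 + t ^ p) t :=
    continuousAt_const.add (Real.continuousAt_rpow_const t p (Or.inr hp0.le))
  exact h1.rpow_const (Or.inl (ghI_base_pos hp ht).ne')

lemma ghI_intInt {p : ℝ} (hp : 2 ≤ p) {a b : ℝ} (ha : 0 ≤ a) (hb : 0 ≤ b) :
    IntervalIntegrable (ghI p) volume a b := by
  apply ContinuousOn.intervalIntegrable
  exact (ghI_contOn hp).mono (by
    intro t ht
    rcases le_total a b with h | h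
    · rw [uIcc_of_le h] at ht; exact le_trans ha ht.1
    · rw [uIcc_of_ge h] at ht; exact le_trans hb ht.1)

lemma arsinhp_zero (p : ℝ) : arsinhp p 0 = 0 := by
  rw [arsinhp_eq, intervalIntegral.integral_same]

lemma arsinhp_sub_le {p : ℝ} (hp : 2 ≤ p) {s1 s2 : ℝ} (h1 : 0 ≤ s1) (h12 : s1 ≤ s2) :
    arsinhp p s2 - arsinhp p s1 ≤ s2 - s1 := by
  have key : arsinhp p s2 - arsinhp p s1 = ∫ t in s1..s2, ghI p t := by
    rw [arsinhp_eq, arsinhp_eq,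
      ← intervalIntegral.integral_add_adjacent_intervals (ghI_intInt hp le_rfl h1)
        (ghI_intInt hp h1 (le_trans h1 h12))]
    ring
  rw [key]
  have := intervalIntegral.integral_mono_on h12 (ghI_intInt hp h1 (le_trans h1 h12))
    intervalIntegrable_const (fun t ht => ghI_le_one hp (le_trans h1 ht.1))
  simpa using this

lemma arsinhp_sub_ge {p : ℝ} (hp : 2 ≤ p) {s1 s2 : ℝ} (h1 : 0 ≤ s1) (h12 : s1 ≤ s2) :
    (s2 - s1) * ghI p s2 ≤ arsinhp p s2 - arsinhp p s1 := by
  have key : arsinhp p s2 - arsinhp p s1 = ∫ t in s1..s2, ghI p t := by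
    rw [arsinhp_eq, arsinhp_eq,
      ← intervalIntegral.integral_add_adjacent_intervals (ghI_intInt hp le_rfl h1)
        (ghI_intInt hp h1 (le_trans h1 h12))]
    ring
  rw [key]
  have := intervalIntegral.integral_mono_on h12 intervalIntegrable_const
    (ghI_intInt hp h1 (le_trans h1 h12))
    (fun t ht => ghI_anti hp (le_trans h1 ht.1) ht.2)
  simpa [mul_comm] using this

lemma arsinhp_le_self {p : ℝ} (hp : 2 ≤ p) {s : ℝ} (h : 0 ≤ s) : arsinhp p s ≤ s := by
  have := arsinhp_sub_le hp le_rfl h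
  rw [arsinhp_zero] at this; linarith

lemma arsinhp_lower {p : ℝ} (hp : 2 ≤ p) {s : ℝ} (h : 0 ≤ s) :
    s * ghI p s ≤ arsinhp p s := by
  have := arsinhp_sub_ge hp le_rfl h
  rw [arsinhp_zero] at this
  simpa using this

lemma arsinhp_mono {p : ℝ} (hp : 2 ≤ p) {s1 s2 : ℝ} (h1 : 0 ≤ s1) (h12 : s1 ≤ s2) :
    arsinhp p s1 ≤ arsinhp p s2 := by
  have h := arsinhp_sub_ge hp h1 h12
  nlinarith [ghI_pos hp (le_trans h1 h12)]

lemma arsinhp_strict {p : ℝ} (hp : 2 ≤ p) {s1 s2 : ℝ} (h1 : 0 ≤ s1) (h12 : s1 < s2) :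
    arsinhp p s1 < arsinhp p s2 := by
  have h := arsinhp_sub_ge hp h1 h12.le
  nlinarith [ghI_pos hp (le_trans h1 h12.le)]

lemma arsinhp_contOn {p : ℝ} (hp : 2 ≤ p) {M : ℝ} (hM : 0 ≤ M) :
    ContinuousOn (arsinhp p) (Icc 0 M) := by
  have h := intervalIntegral.continuousOn_primitive_interval (a := 0) (b := M)
    (f := ghI p) (μ := volume) ?_
  · rw [uIcc_of_le hM] at h
    exact fun x hx => ((h x hx).congr (fun y hy => (arsinhp_eq p y).symm)
      ((arsinhp_eq p x).symm))
  · rw [uIcc_of_le hM]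
    exact (intervalIntegrable_iff_integrableOn_Icc_of_le hM).1 (ghI_intInt hp le_rfl hM)

lemma arsinhp_log_le {p : ℝ} (hp : 2 ≤ p) {s : ℝ} (hs : 1 ≤ s) :
    Real.log s / 2 ≤ arsinhp p s := by
  have hp0 : (0:ℝ) < p := by linarith
  have hG1 : 0 ≤ arsinhp p 1 := by
    have := arsinhp_lower hp (le_refl (0:ℝ) |>.trans zero_le_one)
    nlinarith [ghI_pos hp (zero_le_one (α := ℝ)), arsinhp_lower hp (zero_le_one (α := ℝ))]
  have hkey : ∀ t ∈ Icc (1:ℝ) s, (1/2) * t⁻¹ ≤ ghI p t := by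
    intro t ht
    have ht1 : (1:ℝ) ≤ t := ht.1
    have ht0 : (0:ℝ) < t := lt_of_lt_of_le one_pos ht1
    have h1 : 1 + t ^ p ≤ 2 * t ^ p := by
      have : (1:ℝ) ≤ t ^ p := Real.one_le_rpow ht1 hp0.le
      linarith
    have hexp : -(1/p) ≤ 0 := by
      have : 0 < 1/p := by positivity
      linarith
    have h2 : ghI p t ≥ (2 * t ^ p) ^ (-(1/p)) :=
      Real.rpow_le_rpow_of_nonpos (ghI_base_pos hp ht0.le) h1 hexp
    have h3 : (2 * t ^ p) ^ (-(1/p)) = 2 ^ (-(1/p)) * t⁻¹ := by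
      rw [Real.mul_rpow (by norm_num) (Real.rpow_nonneg ht0.le p),
        ← Real.rpow_mul ht0.le, show p * -(1/p) = -1 by field_simp, Real.rpow_neg_one]
    have h4 : (1/2 : ℝ) ≤ 2 ^ (-(1/p)) := by
      have : (2:ℝ) ^ (-1 : ℝ) ≤ 2 ^ (-(1/p)) := by
        apply Real.rpow_le_rpow_of_exponent_le one_le_two
        have h5 : 1/p ≤ 1 := by
          rw [div_le_one hp0]; linarith
        linarith
      rw [Real.rpow_neg_one] at this
      linarith [this]
    calc (1/2) * t⁻¹ ≤ 2 ^ (-(1/p)) * t⁻¹ := by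
          apply mul_le_mul_of_nonneg_right h4 (by positivity)
      _ = (2 * t ^ p) ^ (-(1/p)) := h3.symm
      _ ≤ ghI p t := h2
  have hint : ∫ t in (1:ℝ)..s, (1/2) * t⁻¹ ≤ ∫ t in (1:ℝ)..s, ghI p t := by
    apply intervalIntegral.integral_mono_on hs
    · apply ContinuousOn.intervalIntegrable
      intro t ht
      rw [uIcc_of_le hs] at ht
      exact (continuousAt_const.mul (continuousAt_inv₀
        (lt_of_lt_of_le one_pos ht.1).ne')).continuousWithinAt
    · exact ghI_intInt hp zero_le_one (le_trans zero_le_one hs)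
    · exact hkey
  have hval : ∫ t in (1:ℝ)..s, (1/2) * t⁻¹ = Real.log s / 2 := by
    rw [intervalIntegral.integral_const_mul, integral_inv_of_pos one_pos
      (lt_of_lt_of_le one_pos hs)]
    simp [Real.log_div (by positivity) one_ne_zero]
    ring
  have hsplit : arsinhp p s = arsinhp p 1 + ∫ t in (1:ℝ)..s, ghI p t := by
    rw [arsinhp_eq, arsinhp_eq,
      intervalIntegral.integral_add_adjacent_intervals (ghI_intInt hp le_rfl zero_le_one)
        (ghI_intInt hp zero_le_one (le_trans zero_le_one hs))]
  rw [hsplit]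
  rw [hval] at hint
  linarith

lemma pipHalf_le_arsinhp {p : ℝ} (hp : 2 ≤ p) :
    pipHalf p ≤ arsinhp p (Real.exp (2 * pipHalf p)) := by
  have hπ : (0:ℝ) < pipHalf p := lt_of_lt_of_le one_pos (pipHalf_pos hp)
  have h1 : (1:ℝ) ≤ Real.exp (2 * pipHalf p) := by
    rw [← Real.exp_zero]
    exact Real.exp_le_exp.2 (by positivity)
  have := arsinhp_log_le hp h1
  rw [Real.log_exp] at this
  linarith

lemma sinhp_spec {p : ℝ} (hp : 2 ≤ p) {x : ℝ} (hx0 : 0 ≤ x) (hx1 : x ≤ pipHalf p) :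
    0 ≤ sinhp p x ∧ arsinhp p (sinhp p x) = x := by
  set M := Real.exp (2 * pipHalf p) with hM
  have hM0 : (0:ℝ) ≤ M := (Real.exp_pos _).le
  have hsurj : x ∈ arsinhp p '' Icc 0 M := by
    apply intermediate_value_Icc hM0 (arsinhp_contOn hp hM0)
    rw [arsinhp_zero]
    exact ⟨hx0, le_trans hx1 (pipHalf_le_arsinhp hp)⟩
  obtain ⟨s, hs, hfs⟩ := hsurj
  have hex : ∃ a ∈ Ici (0:ℝ), arsinhp p a = x := ⟨s, hs.1, hfs⟩
  exact ⟨Function.invFunOn_mem hex, Function.invFunOn_eq hex⟩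

lemma sinhp_ge_self {p : ℝ} (hp : 2 ≤ p) {x : ℝ} (hx0 : 0 ≤ x) (hx1 : x ≤ pipHalf p) :
    x ≤ sinhp p x := by
  obtain ⟨h0, heq⟩ := sinhp_spec hp hx0 hx1
  calc x = arsinhp p (sinhp p x) := heq.symm
  _ ≤ sinhp p x := arsinhp_le_self hp h0

lemma sinhp_pos {p : ℝ} (hp : 2 ≤ p) {x : ℝ} (hx0 : 0 < x) (hx1 : x ≤ pipHalf p) :
    0 < sinhp p x := lt_of_lt_of_le hx0 (sinhp_ge_self hp hx0.le hx1)

lemma sinhp_mul_le {p : ℝ} (hp : 2 ≤ p) {x : ℝ} (hx0 : 0 ≤ x) (hx1 : x ≤ pipHalf p) :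
    sinhp p x * ghI p (sinhp p x) ≤ x := by
  obtain ⟨h0, heq⟩ := sinhp_spec hp hx0 hx1
  calc sinhp p x * ghI p (sinhp p x) ≤ arsinhp p (sinhp p x) := arsinhp_lower hp h0
  _ = x := heq

lemma sinhp_le_one {p : ℝ} (hp : 2 ≤ p) {x : ℝ} (hx0 : 0 ≤ x)
    (hx1 : x ≤ pipHalf p) (hx2 : x < arsinhp p 1) : sinhp p x < 1 := by
  obtain ⟨h0, heq⟩ := sinhp_spec hp hx0 hx1
  by_contra hcon
  push_neg at hcon
  have := arsinhp_mono hp zero_le_one hcon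
  rw [heq] at this
  linarith

lemma arsinhp_one_pos {p : ℝ} (hp : 2 ≤ p) : 0 < arsinhp p 1 := by
  have h := arsinhp_lower hp (zero_le_one (α := ℝ))
  nlinarith [ghI_pos hp (zero_le_one (α := ℝ))]

lemma arsinhp_one_le_pipHalf {p : ℝ} (hp : 2 ≤ p) : arsinhp p 1 ≤ pipHalf p :=
  le_trans (arsinhp_le_self hp zero_le_one) (pipHalf_pos hp)

lemma sinhp_tendsto_zero {p : ℝ} (hp : 2 ≤ p) :
    Tendsto (sinhp p) (𝓝[>] (0:ℝ)) (𝓝[>] (0:ℝ)) := by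
  have hπ : (0:ℝ) < pipHalf p := lt_of_lt_of_le one_pos (pipHalf_pos hp)
  have hG1 : 0 < arsinhp p 1 := arsinhp_one_pos hp
  have hev : ∀ᶠ x in 𝓝[>] (0:ℝ), x ∈ Ioo (0:ℝ) (arsinhp p 1) :=
    Filter.eventually_mem_set.2 (Ioo_mem_nhdsGT_of_mem ⟨le_rfl, hG1⟩)
  rw [tendsto_nhdsWithin_iff]
  constructor
  · have hup : Tendsto (fun x : ℝ => 2 * x) (𝓝[>] (0:ℝ)) (𝓝 0) := by
      have h : Continuous (fun x : ℝ => 2 * x) := continuous_const.mul continuous_id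
      have h2 := h.tendsto 0
      simp only [mul_zero] at h2
      exact h2.mono_left nhdsWithin_le_nhds
    apply tendsto_of_tendsto_of_tendsto_of_le_of_le' tendsto_const_nhds hup
    · filter_upwards [hev] with x hx
      exact le_trans hx.1.le (sinhp_ge_self hp hx.1.le
        (le_trans hx.2.le (arsinhp_one_le_pipHalf hp)))
    · filter_upwards [hev] with x hx
      have hx1 : x ≤ pipHalf p := le_trans hx.2.le (arsinhp_one_le_pipHalf hp)
      have hs1 : sinhp p x < 1 := sinhp_le_one hp hx.1.le hx1 hx.2
      have hs0 : 0 < sinhp p x := sinhp_pos hp hx.1 hx1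
      have hghi : ghI p 1 ≤ ghI p (sinhp p x) := ghI_anti hp hs0.le hs1.le
      have hhalf : (1/2 : ℝ) ≤ ghI p 1 := by
        unfold ghI
        rw [Real.one_rpow]
        have h3 : ((2:ℝ)) ^ (-(1/p)) = (1 + 1 : ℝ) ^ (-(1/p)) := by norm_num
        have h4 : (1/2 : ℝ) ≤ 2 ^ (-(1/p)) := by
          have hp0 : (0:ℝ) < p := by linarith
          have : (2:ℝ) ^ (-1 : ℝ) ≤ 2 ^ (-(1/p)) := by
            apply Real.rpow_le_rpow_of_exponent_le one_le_two
            have h5 : 1/p ≤ 1 := by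
              rw [div_le_one hp0]; linarith
            linarith
          rw [Real.rpow_neg_one] at this
          linarith
        rw [h3] at h4
        exact h4
      have hmul := sinhp_mul_le hp hx.1.le hx1
      have : sinhp p x * (1/2) ≤ x := by
        calc sinhp p x * (1/2) ≤ sinhp p x * ghI p (sinhp p x) := by
              apply mul_le_mul_of_nonneg_left (le_trans hhalf hghi) hs0.le
        _ ≤ x := hmul
      linarith
  · filter_upwards [hev] with x hx
    exact sinhp_pos hp hx.1 (le_trans hx.2.le (arsinhp_one_le_pipHalf hp))

lemma sinhp_pipHalf_pos {p : ℝ} (hp : 2 ≤ p) : 0 < sinhp p (pipHalf p) :=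
  sinhp_pos hp (lt_of_lt_of_le one_pos (pipHalf_pos hp)) le_rfl

lemma sinhp_tendsto_pipHalf {p : ℝ} (hp : 2 ≤ p) :
    Tendsto (sinhp p) (𝓝[<] (pipHalf p)) (𝓝 (sinhp p (pipHalf p))) := by
  have hπ : (0:ℝ) < pipHalf p := lt_of_lt_of_le one_pos (pipHalf_pos hp)
  set s0 := sinhp p (pipHalf p) with hs0def
  have hs00 : 0 < s0 := sinhp_pipHalf_pos hp
  have hGs0 : arsinhp p s0 = pipHalf p := (sinhp_spec hp hπ.le le_rfl).2
  have hev : ∀ᶠ x in 𝓝[<] (pipHalf p), x ∈ Ioo (0:ℝ) (pipHalf p) :=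
    Filter.eventually_mem_set.2 (Ioo_mem_nhdsLT_of_mem ⟨hπ, le_rfl⟩)
  rw [tendsto_order]
  constructor
  · intro c hc
    set c' := max c 0 with hc'
    have hc'0 : 0 ≤ c' := le_max_right _ _
    have hc's : c' < s0 := max_lt hc hs00
    have hGc : arsinhp p c' < pipHalf p := by
      rw [← hGs0]
      exact arsinhp_strict hp hc'0 hc's
    filter_upwards [Filter.eventually_mem_set.2
      (Ioo_mem_nhdsLT_of_mem ⟨hGc, le_rfl⟩), hev] with x hx hx2
    by_contra hcon
    push_neg at hcon
    have hsx : sinhp p x ≤ c' := le_trans hcon (le_max_left _ _)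
    have h0 := (sinhp_spec hp hx2.1.le hx2.2.le)
    have := arsinhp_mono hp h0.1 hsx
    rw [h0.2] at this
    linarith [hx.1]
  · intro c hc
    filter_upwards [hev] with x hx
    by_contra hcon
    push_neg at hcon
    have h0 := (sinhp_spec hp hx.1.le hx.2.le)
    have hc0 : 0 ≤ s0 := hs00.le
    have := arsinhp_strict hp hc0 (lt_of_lt_of_le hc hcon)
    rw [h0.2, hGs0] at this
    linarith [hx.2]

lemma sinhp_rpow_tendsto {p : ℝ} (hp : 2 ≤ p) :
    Tendsto (fun x => sinhp p x ^ p) (𝓝[>] (0:ℝ)) (𝓝 0) := by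
  have hp0 : (0:ℝ) < p := by linarith
  exact ((rpow_tendsto_zero_within p hp0).mono_right nhdsWithin_le_nhds).comp
    (sinhp_tendsto_zero hp)

lemma sinhp_ratio_tendsto {p : ℝ} (hp : 2 ≤ p) :
    Tendsto (fun x => sinhp p x / x) (𝓝[>] (0:ℝ)) (𝓝 1) := by
  have hπ : (0:ℝ) < pipHalf p := lt_of_lt_of_le one_pos (pipHalf_pos hp)
  have hev : ∀ᶠ x in 𝓝[>] (0:ℝ), x ∈ Ioo (0:ℝ) (pipHalf p) :=
    Filter.eventually_mem_set.2 (Ioo_mem_nhdsGT_of_mem ⟨le_rfl, hπ⟩)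
  have hub : Tendsto (fun x => (ghI p (sinhp p x))⁻¹) (𝓝[>] (0:ℝ)) (𝓝 1) := by
    have h1 : Tendsto (ghI p) (𝓝[Ici 0] (0:ℝ)) (𝓝 1) := by
      have h2 := (ghI_contOn hp 0 self_mem_Ici)
      have h3 : ghI p 0 = 1 := by
        unfold ghI
        have hp0 : (0:ℝ) < p := by linarith
        rw [Real.zero_rpow hp0.ne']
        norm_num
      rw [ContinuousWithinAt, h3] at h2
      exact h2
    have h4 : Tendsto (sinhp p) (𝓝[>] (0:ℝ)) (𝓝[Ici 0] (0:ℝ)) :=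
      (sinhp_tendsto_zero hp).mono_right (nhdsWithin_mono 0 Ioi_subset_Ici_self)
    have := (h1.comp h4).inv₀ one_ne_zero
    simpa using this
  apply tendsto_of_tendsto_of_tendsto_of_le_of_le' tendsto_const_nhds hub
  · filter_upwards [hev] with x hx
    rw [le_div_iff₀ hx.1, one_mul]
    exact sinhp_ge_self hp hx.1.le hx.2.le
  · filter_upwards [hev] with x hx
    have hx0 : 0 < x := hx.1
    have hs0 : 0 < sinhp p x := sinhp_pos hp hx0 hx.2.le
    have hghI : 0 < ghI p (sinhp p x) := ghI_pos hp hs0.le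
    have hmul := sinhp_mul_le hp hx0.le hx.2.le
    have h1 : sinhp p x ≤ x * (ghI p (sinhp p x))⁻¹ := by
      rw [← div_eq_mul_inv, le_div_iff₀ hghI]
      exact hmul
    rw [div_le_iff₀ hx0]
    linarith [h1, mul_comm x (ghI p (sinhp p x))⁻¹]

lemma hB_tendsto {p : ℝ} (hp : 2 ≤ p) :
    Tendsto (fun x => Real.log (coshp p x) / x ^ p) (𝓝[>] (0:ℝ)) (𝓝 (1/p)) := by
  have hp0 : (0:ℝ) < p := by linarith
  have hπ : (0:ℝ) < pipHalf p := lt_of_lt_of_le one_pos (pipHalf_pos hp)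
  have hL : Tendsto (fun x => Lfun (sinhp p x ^ p)) (𝓝[>] (0:ℝ)) (𝓝 1) :=
    Lfun_tendsto.comp (sinhp_rpow_tendsto hp)
  have hpow : Tendsto (fun x => (sinhp p x / x) ^ p) (𝓝[>] (0:ℝ)) (𝓝 1) := by
    have h2 : ContinuousAt (fun v : ℝ => v ^ p) 1 :=
      Real.continuousAt_rpow_const 1 p (Or.inl one_ne_zero)
    have := h2.tendsto.comp (sinhp_ratio_tendsto hp)
    rwa [Real.one_rpow] at this
  have h := (hL.mul hpow).const_mul (1/p)
  rw [mul_one, mul_one] at h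
  apply h.congr'
  filter_upwards [Filter.eventually_mem_set.2 (Ioo_mem_nhdsGT_of_mem
    (show (0:ℝ) ∈ Ico (0:ℝ) (pipHalf p) from ⟨le_rfl, hπ⟩))] with x hx
  have hx0 : 0 < x := hx.1
  have hs0 : 0 < sinhp p x := sinhp_pos hp hx0 hx.2.le
  have hbase : 0 < 1 + sinhp p x ^ p := ghI_base_pos hp hs0.le
  have h1 : Real.log (coshp p x) = (1/p) * Real.log (1 + sinhp p x ^ p) := by
    unfold coshp
    rw [Real.log_rpow hbase]
  have h2 : Real.log (1 + sinhp p x ^ p) = sinhp p x ^ p * Lfun (sinhp p x ^ p) :=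
    Lfun_mul _
  have h3 : (sinhp p x / x) ^ p = sinhp p x ^ p / x ^ p :=
    Real.div_rpow hs0.le hx0.le p
  have hxp : x ^ p ≠ 0 := (Real.rpow_pos_of_pos hx0 p).ne'
  rw [h1, h2]
  rw [h3]
  field_simp

lemma coshp_tendsto_pipHalf {p : ℝ} (hp : 2 ≤ p) :
    Tendsto (coshp p) (𝓝[<] (pipHalf p)) (𝓝 (coshp p (pipHalf p))) := by
  have hs00 : 0 < sinhp p (pipHalf p) := sinhp_pipHalf_pos hp
  have hp0 : (0:ℝ) < p := by linarith
  have hbase : 0 < 1 + sinhp p (pipHalf p) ^ p := ghI_base_pos hp hs00.le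
  have hc : ContinuousAt (fun t : ℝ => (1 + t ^ p) ^ (1/p : ℝ)) (sinhp p (pipHalf p)) := by
    have h1 : ContinuousAt (fun t : ℝ => 1 + t ^ p) (sinhp p (pipHalf p)) :=
      continuousAt_const.add (Real.continuousAt_rpow_const _ p (Or.inr hp0.le))
    exact h1.rpow_const (Or.inl hbase.ne')
  exact hc.tendsto.comp (sinhp_tendsto_pipHalf hp)

lemma coshp_gt_one {p : ℝ} (hp : 2 ≤ p) {x : ℝ} (hx0 : 0 < x) (hx1 : x ≤ pipHalf p) :
    1 < coshp p x := by
  have hp0 : (0:ℝ) < p := by linarith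
  have hs0 : 0 < sinhp p x := sinhp_pos hp hx0 hx1
  have hbase : 1 < 1 + sinhp p x ^ p := by
    have := Real.rpow_pos_of_pos hs0 p
    linarith
  unfold coshp
  rw [Real.one_lt_rpow_iff (by linarith)]
  exact Or.inl ⟨hbase, by positivity⟩

theorem stmt_5 (p : ℝ) (hp : 2 ≤ p)
    (β : ℝ) (hβ : β = Real.log (pipHalf p) / Real.log (coshp p (pipHalf p))) :
    (∀ a : ℝ, (∀ x ∈ Set.Ioo 0 (pipHalf p), sinp p x / x < coshp p x ^ (-a)) →
      a ≤ 1 / (1 + p)) ∧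
    (∀ b : ℝ, (∀ x ∈ Set.Ioo 0 (pipHalf p), coshp p x ^ (-b) < sinp p x / x) →
      b ≥ β) ∧
    Tendsto (fun x => Real.log (x / sinp p x) / Real.log (coshp p x))
      (𝓝[>] (0:ℝ)) (𝓝 (1 / (1 + p))) ∧
    Tendsto (fun x => Real.log (x / sinp p x) / Real.log (coshp p x))
      (𝓝[<] (pipHalf p)) (𝓝 β) := by
  have hp0 : (0:ℝ) < p := by linarith
  have hπ : (0:ℝ) < pipHalf p := lt_of_lt_of_le one_pos (pipHalf_pos hp)
  have hdd : ∀ a b c : ℝ, c ≠ 0 → (a/c)/(b/c) = a/b := by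
    intro a b c hc
    rcases eq_or_ne b 0 with h | h
    · simp [h]
    · field_simp
  -- Conjunct 3
  have conj3 : Tendsto (fun x => Real.log (x / sinp p x) / Real.log (coshp p x))
      (𝓝[>] (0:ℝ)) (𝓝 (1 / (1 + p))) := by
    have h := (hA_tendsto hp).div (hB_tendsto hp) (one_div_ne_zero hp0.ne')
    have hval : (1/(p*(p+1))) / (1/p) = 1 / (1 + p) := by
      have h1 : p + 1 ≠ 0 := by linarith
      have h2 : (1:ℝ) + p ≠ 0 := by linarith
      field_simp
      ring_nf
      try exact Or.inl trivial
    rw [hval] at h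
    apply h.congr'
    filter_upwards [self_mem_nhdsWithin] with x hx
    have hx0 : (0:ℝ) < x := hx
    have hxp : x ^ p ≠ 0 := (Real.rpow_pos_of_pos hx0 p).ne'
    simp only [Pi.div_apply]
    exact hdd _ _ _ hxp
  -- Conjunct 4
  have hcosh1 : 1 < coshp p (pipHalf p) := coshp_gt_one hp hπ le_rfl
  have hlogcπ : 0 < Real.log (coshp p (pipHalf p)) := Real.log_pos hcosh1
  have conj4 : Tendsto (fun x => Real.log (x / sinp p x) / Real.log (coshp p x))
      (𝓝[<] (pipHalf p)) (𝓝 β) := by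
    have hnum0 : Tendsto (fun x => x / sinp p x) (𝓝[<] (pipHalf p)) (𝓝 (pipHalf p)) := by
      have h1 : Tendsto (fun x : ℝ => x) (𝓝[<] (pipHalf p)) (𝓝 (pipHalf p)) :=
        tendsto_id.mono_left nhdsWithin_le_nhds
      have := h1.div (sinp_tendsto_one hp) one_ne_zero
      rwa [div_one] at this
    have hnum : Tendsto (fun x => Real.log (x / sinp p x)) (𝓝[<] (pipHalf p))
        (𝓝 (Real.log (pipHalf p))) :=
      (Real.continuousAt_log hπ.ne').tendsto.comp hnum0
    have hden : Tendsto (fun x => Real.log (coshp p x)) (𝓝[<] (pipHalf p))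
        (𝓝 (Real.log (coshp p (pipHalf p)))) :=
      (Real.continuousAt_log (show coshp p (pipHalf p) ≠ 0 by linarith)).tendsto.comp
        (coshp_tendsto_pipHalf hp)
    rw [hβ]
    exact hnum.div hden hlogcπ.ne'
  refine ⟨?_, ?_, conj3, conj4⟩
  · intro a ha
    apply ge_of_tendsto conj3
    filter_upwards [Filter.eventually_mem_set.2
      (Ioo_mem_nhdsGT_of_mem ⟨le_rfl, hπ⟩)] with x hx
    have hx0 : 0 < x := hx.1
    have hs0 : 0 < sinp p x := sinp_pos hp hx0 hx.2.le
    have hc1 : 1 < coshp p x := coshp_gt_one hp hx0 hx.2.le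
    have hlogc : 0 < Real.log (coshp p x) := Real.log_pos hc1
    have hgt := ha x hx
    have hlt : Real.log (sinp p x / x) < Real.log (coshp p x ^ (-a)) :=
      Real.log_lt_log (div_pos hs0 hx0) hgt
    rw [Real.log_rpow (by linarith : (0:ℝ) < coshp p x),
      show sinp p x / x = (x / sinp p x)⁻¹ by rw [inv_div], Real.log_inv] at hlt
    rw [le_div_iff₀ hlogc]
    nlinarith
  · intro b hb
    apply le_of_tendsto conj4
    filter_upwards [Filter.eventually_mem_set.2
      (Ioo_mem_nhdsLT_of_mem ⟨hπ, le_rfl⟩)] with x hx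
    have hx0 : 0 < x := hx.1
    have hs0 : 0 < sinp p x := sinp_pos hp hx0 hx.2.le
    have hc1 : 1 < coshp p x := coshp_gt_one hp hx0 hx.2.le
    have hlogc : 0 < Real.log (coshp p x) := Real.log_pos hc1
    have hgt := hb x hx
    have hlt : Real.log (coshp p x ^ (-b)) < Real.log (sinp p x / x) :=
      Real.log_lt_log (Real.rpow_pos_of_pos (by linarith) _) hgt
    rw [Real.log_rpow (by linarith : (0:ℝ) < coshp p x),
      show sinp p x / x = (x / sinp p x)⁻¹ by rw [inv_div], Real.log_inv] at hlt
    rw [div_le_iff₀ hlogc]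
    nlinarith
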